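/- Fix α > 0 and δ ∈ (−1, ∞) with α + δ ≤ 1/2. There is an absolute constant C < ∞ such that for every integer n ≥ 2, with N = ⌊n^{1+α}⌋ and A = n^{-(1-α-δ)}: E₀(L_π²) ≤ exp(C·n^{2δ}). In particular Var₀(L_π) ≤ exp(C·n^{2δ}) − 1. -/

import Mathlib

open MeasureTheory ProbabilityTheory Real Filter Topology

noncomputable section

/-- Law of the N×N Gaussian observation matrix with mean matrix θ and unit variances. -/
def PTheta (N : ℕ) (θ : Fin N → Fin N → ℝ) : Measure (Fin N → Fin N → ℝ) :=
  Measure.pi fun i => Measure.pi fun j => gaussianReal (θ i j) 1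

/-- Parameter space Θ(A, n, N). -/
def ThetaSet (A : ℝ) (n N : ℕ) : Set (Fin N → Fin N → ℝ) :=
  {θ | ∃ R C : Finset (Fin N), R.card = n ∧ C.card = n ∧
    (∀ i j, i ∈ R → j ∈ C → A ≤ θ i j) ∧
    (∀ i j, ¬(i ∈ R ∧ j ∈ C) → θ i j = 0)}

/-- Risk of the test with rejection region `T`: type-I error plus worst-case type-II error. -/
def testRisk (n N : ℕ) (A : ℝ) (T : Set (Fin N → Fin N → ℝ)) : ℝ :=
  (PTheta N 0 T).toReal + ⨆ θ : ThetaSet A n N, (PTheta N θ.1 Tᶜ).toReal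

/-- Minimax risk over all (measurable) tests. -/
def minimaxRisk (n N : ℕ) (A : ℝ) : ℝ :=
  ⨅ T : {T : Set (Fin N → Fin N → ℝ) // MeasurableSet T}, testRisk n N A T.1

/-- The family S of n×n product subsets R×C of [N]×[N]. -/
def SIdx (n N : ℕ) : Type :=
  {p : Finset (Fin N) × Finset (Fin N) // p.1.card = n ∧ p.2.card = n}

instance (n N : ℕ) : Fintype (SIdx n N) := by unfold SIdx; infer_instance

/-- The sum X_S of the entries of x over the product set S = R×C. -/
def XS {n N : ℕ} (S : SIdx n N) (x : Fin N → Fin N → ℝ) : ℝ :=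
  ∑ i ∈ S.1.1, ∑ j ∈ S.1.2, x i j

/-- The integrated likelihood ratio `L_π = (1/|S|) Σ_S exp(A X_S − A²n²/2)`. -/
def Lpi (n N : ℕ) (A : ℝ) (x : Fin N → Fin N → ℝ) : ℝ :=
  (((N.choose n : ℝ)) ^ 2)⁻¹ * ∑ S : SIdx n N, Real.exp (A * XS S x - A ^ 2 * (n : ℝ) ^ 2 / 2)

/-! ### Auxiliary lemmas -/

set_option maxHeartbeats 2000000

section GaussAux

lemma exp_mul_gaussPDF (t x : ℝ) :
    Real.exp (t * x) * gaussianPDFReal 0 1 x = Real.exp (t ^ 2 / 2) * gaussianPDFReal t 1 x := by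
  simp only [gaussianPDFReal, NNReal.coe_one, mul_one, sub_zero]
  rw [mul_comm, mul_assoc,
    show rexp (-x ^ 2 / 2) * rexp (t * x) = rexp (t ^ 2 / 2) * rexp (-(x - t) ^ 2 / 2) from by
    rw [← Real.exp_add, ← Real.exp_add]; congr 1; ring]
  ring

lemma integrable_exp_mul_gauss (t : ℝ) :
    Integrable (fun x => Real.exp (t * x)) (gaussianReal 0 1) := by
  rw [gaussianReal_of_var_ne_zero _ one_ne_zero, gaussianPDF_def,
    integrable_withDensity_iff_integrable_smul' ((measurable_gaussianPDFReal 0 1).ennreal_ofReal)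
      (ae_of_all _ fun x => ENNReal.ofReal_lt_top)]
  have : (fun x => (ENNReal.ofReal (gaussianPDFReal 0 1 x)).toReal • Real.exp (t * x))
      = fun x => Real.exp (t ^ 2 / 2) * gaussianPDFReal t 1 x := by
    ext x
    rw [ENNReal.toReal_ofReal (gaussianPDFReal_nonneg 0 1 x), smul_eq_mul, mul_comm,
      exp_mul_gaussPDF]
  rw [this]
  exact (integrable_gaussianPDFReal t 1).const_mul _

lemma integral_exp_mul_gauss (t : ℝ) :
    ∫ x, Real.exp (t * x) ∂(gaussianReal 0 1) = Real.exp (t ^ 2 / 2) := by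
  rw [gaussianReal_of_var_ne_zero _ one_ne_zero, gaussianPDF_def]
  have h : (fun x : ℝ => ENNReal.ofReal (gaussianPDFReal 0 1 x))
      = fun x => ((gaussianPDFReal 0 1 x).toNNReal : ENNReal) := rfl
  rw [h, integral_withDensity_eq_integral_smul
    ((measurable_gaussianPDFReal 0 1).real_toNNReal) _]
  have : (fun x => ((gaussianPDFReal 0 1 x).toNNReal : NNReal) • Real.exp (t * x))
      = fun x => Real.exp (t ^ 2 / 2) * gaussianPDFReal t 1 x := by
    ext x
    rw [NNReal.smul_def, smul_eq_mul, Real.coe_toNNReal _ (gaussianPDFReal_nonneg 0 1 x),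
      mul_comm, exp_mul_gaussPDF]
  rw [this, integral_const_mul, integral_gaussianPDFReal_eq_one t one_ne_zero, mul_one]

end GaussAux

instance (N : ℕ) (θ : Fin N → Fin N → ℝ) : IsProbabilityMeasure (PTheta N θ) := by
  unfold PTheta; infer_instance

lemma integrable_exp_sum (N : ℕ) (c : Fin N → Fin N → ℝ) :
    Integrable (fun x : Fin N → Fin N → ℝ => Real.exp (∑ i, ∑ j, c i j * x i j)) (PTheta N 0) := by
  letI : MeasureSpace ℝ := ⟨gaussianReal 0 1⟩
  haveI : SigmaFinite (volume : Measure ℝ) := (inferInstance : SigmaFinite (gaussianReal 0 1))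
  have hvol : PTheta N 0 = (volume : Measure (Fin N → Fin N → ℝ)) := rfl
  have hfun : (fun x : Fin N → Fin N → ℝ => Real.exp (∑ i, ∑ j, c i j * x i j))
      = fun x => ∏ i, (fun y : Fin N → ℝ => ∏ j, Real.exp (c i j * y j)) (x i) := by
    ext x
    rw [Real.exp_sum]
    exact Finset.prod_congr rfl fun i _ => Real.exp_sum _ _
  rw [hvol, hfun]
  exact Integrable.fintype_prod (E := Fin N → ℝ)
    (f := fun i y => ∏ j, Real.exp (c i j * y j))
    fun i => Integrable.fintype_prod (E := ℝ) (f := fun j z => Real.exp (c i j * z))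
      fun j => integrable_exp_mul_gauss _

lemma integral_exp_sum (N : ℕ) (c : Fin N → Fin N → ℝ) :
    ∫ x, Real.exp (∑ i, ∑ j, c i j * x i j) ∂(PTheta N 0)
      = Real.exp (∑ i, ∑ j, (c i j) ^ 2 / 2) := by
  letI : MeasureSpace ℝ := ⟨gaussianReal 0 1⟩
  haveI : SigmaFinite (volume : Measure ℝ) := (inferInstance : SigmaFinite (gaussianReal 0 1))
  have hvol : PTheta N 0 = (volume : Measure (Fin N → Fin N → ℝ)) := rfl
  have hfun : (fun x : Fin N → Fin N → ℝ => Real.exp (∑ i, ∑ j, c i j * x i j))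
      = fun x => ∏ i, (fun y : Fin N → ℝ => ∏ j, Real.exp (c i j * y j)) (x i) := by
    ext x
    rw [Real.exp_sum]
    exact Finset.prod_congr rfl fun i _ => Real.exp_sum _ _
  rw [hvol, hfun]
  have h1 := MeasureTheory.integral_fintype_prod_eq_prod (𝕜 := ℝ) (E := fun _ => Fin N → ℝ) (μ := fun _ => volume)
    (fun i y => ∏ j, Real.exp (c i j * y j))
  erw [h1, Real.exp_sum]
  refine Finset.prod_congr rfl fun i _ => ?_
  have h2 := MeasureTheory.integral_fintype_prod_eq_prod (𝕜 := ℝ) (E := fun _ => ℝ) (μ := fun _ => volume)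
    (fun j z => Real.exp (c i j * z))
  erw [h2, Real.exp_sum]
  exact Finset.prod_congr rfl fun j _ => integral_exp_mul_gauss _

section IndAux

lemma sum_ind_mul {N : ℕ} (R C : Finset (Fin N)) (x : Fin N → Fin N → ℝ) :
    ∑ i, ∑ j, (if i ∈ R ∧ j ∈ C then (1:ℝ) else 0) * x i j = ∑ i ∈ R, ∑ j ∈ C, x i j := by
  have h : ∀ i, ∑ j, (if i ∈ R ∧ j ∈ C then (1:ℝ) else 0) * x i j
      = if i ∈ R then ∑ j ∈ C, x i j else 0 := by
    intro i
    by_cases hi : i ∈ R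
    · simp only [hi, true_and, if_true, ite_mul, one_mul, zero_mul]
      rw [Finset.sum_ite_mem, Finset.univ_inter]
    · simp [hi]
  rw [Finset.sum_congr rfl fun i _ => h i, Finset.sum_ite_mem, Finset.univ_inter]

lemma sum_ind_one {N : ℕ} (R C : Finset (Fin N)) :
    ∑ i, ∑ j, (if i ∈ R ∧ j ∈ C then (1:ℝ) else 0) = (R.card : ℝ) * C.card := by
  have := sum_ind_mul R C (fun _ _ => (1:ℝ))
  simp only [mul_one] at this
  rw [this]
  simp [Finset.sum_const, mul_comm]

lemma sum_sq_coeff {N : ℕ} (A : ℝ) (R C R' C' : Finset (Fin N)) :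
    ∑ i, ∑ j, (A * ((if i ∈ R ∧ j ∈ C then (1:ℝ) else 0)
        + (if i ∈ R' ∧ j ∈ C' then (1:ℝ) else 0))) ^ 2 / 2
      = A ^ 2 * ((R.card : ℝ) * C.card + (R'.card : ℝ) * C'.card
          + 2 * (((R ∩ R').card : ℝ) * ((C ∩ C').card : ℝ))) / 2 := by
  have key : ∀ i j, (A * ((if i ∈ R ∧ j ∈ C then (1:ℝ) else 0)
        + (if i ∈ R' ∧ j ∈ C' then (1:ℝ) else 0))) ^ 2 / 2
      = A ^ 2 * ((if i ∈ R ∧ j ∈ C then (1:ℝ) else 0) + (if i ∈ R' ∧ j ∈ C' then (1:ℝ) else 0)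
          + 2 * (if i ∈ R ∩ R' ∧ j ∈ C ∩ C' then (1:ℝ) else 0)) / 2 := by
    intro i j
    have hmem : (i ∈ R ∩ R' ∧ j ∈ C ∩ C') ↔ ((i ∈ R ∧ j ∈ C) ∧ (i ∈ R' ∧ j ∈ C')) := by
      simp only [Finset.mem_inter]; tauto
    rw [if_congr hmem rfl rfl]
    by_cases h1 : i ∈ R ∧ j ∈ C <;> by_cases h2 : i ∈ R' ∧ j ∈ C' <;>
      simp only [h1, h2, if_true, if_false, and_true, and_false, true_and, false_and] <;> ring
  simp only [key]
  simp only [← Finset.sum_div]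
  congr 1
  simp only [← Finset.mul_sum]
  congr 1
  simp only [Finset.sum_add_distrib]
  rw [sum_ind_one R C, sum_ind_one R' C']
  simp_rw [← Finset.mul_sum]
  rw [sum_ind_one]

end IndAux

section CombAux
open Finset

lemma card_supersets {N k n : ℕ} (K : Finset (Fin N)) (hK : K.card = k) (hkn : k ≤ n) :
    ((Finset.powersetCard n (Finset.univ : Finset (Fin N))).filter fun R => K ⊆ R).card
      = (N - k).choose (n - k) := by
  rw [show (N - k).choose (n - k) = (Finset.powersetCard (n - k) (Finset.univ \ K)).card from by
    rw [card_powersetCard, card_sdiff_of_subset (subset_univ K), card_univ, Fintype.card_fin, hK]]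
  apply Finset.card_bij (fun R _ => R \ K)
  · intro R hR
    simp only [mem_filter, mem_powersetCard_univ] at hR
    rw [mem_powersetCard]
    exact ⟨sdiff_subset_sdiff (subset_univ R) le_rfl,
      by rw [card_sdiff_of_subset hR.2, hR.1, hK]⟩
  · intro R hR R' hR' h
    simp only [mem_filter, mem_powersetCard_univ] at hR hR'
    rw [← sdiff_union_of_subset hR.2, ← sdiff_union_of_subset hR'.2, h]
  · intro T hT
    rw [mem_powersetCard] at hT
    obtain ⟨hT1, hT2⟩ := hT
    rw [subset_sdiff] at hT1
    refine ⟨T ∪ K, ?_, ?_⟩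
    · simp only [mem_filter, mem_powersetCard_univ]
      refine ⟨?_, subset_union_right⟩
      rw [card_union_of_disjoint hT1.2, hT2, hK]
      omega
    · rw [union_sdiff_distrib, sdiff_self]
      simp only [union_empty, bot_eq_empty, union_empty]
      exact Finset.sdiff_eq_self_iff_disjoint.mpr hT1.2

lemma count_pairs {N n k : ℕ} (hk : k ≤ n) :
    ∑ R ∈ Finset.powersetCard n (Finset.univ : Finset (Fin N)),
      ∑ R' ∈ Finset.powersetCard n (Finset.univ : Finset (Fin N)), ((R ∩ R').card.choose k)
    = N.choose k * ((N - k).choose (n - k)) ^ 2 := by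
  have h1 : ∀ s : Finset (Fin N), s.card.choose k
      = ∑ K ∈ Finset.powersetCard k (Finset.univ : Finset (Fin N)), if K ⊆ s then 1 else 0 := by
    intro s
    rw [← Finset.card_filter]
    rw [show (Finset.powersetCard k (Finset.univ : Finset (Fin N))).filter (fun K => K ⊆ s)
        = Finset.powersetCard k s from by
      ext K
      simp only [mem_filter, mem_powersetCard_univ, mem_powersetCard]
      exact ⟨fun h => ⟨h.2, h.1.2⟩, fun h => ⟨⟨subset_univ K, h.2⟩, h.1⟩⟩]
    rw [card_powersetCard]
  simp only [h1]
  calc ∑ R ∈ powersetCard n (univ : Finset (Fin N)), ∑ R' ∈ powersetCard n (univ : Finset (Fin N)),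
        ∑ K ∈ powersetCard k (univ : Finset (Fin N)), (if K ⊆ R ∩ R' then 1 else 0)
      = ∑ K ∈ powersetCard k (univ : Finset (Fin N)),
          ∑ R ∈ powersetCard n (univ : Finset (Fin N)),
          ∑ R' ∈ powersetCard n (univ : Finset (Fin N)), (if K ⊆ R ∩ R' then 1 else 0) := by
        rw [Finset.sum_congr rfl fun R _ => Finset.sum_comm, Finset.sum_comm]
    _ = ∑ K ∈ powersetCard k (univ : Finset (Fin N)), (N - k).choose (n - k) ^ 2 := by
        refine Finset.sum_congr rfl fun K hK => ?_
        rw [mem_powersetCard_univ] at hK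
        have hsplit : ∀ R R' : Finset (Fin N), (if K ⊆ R ∩ R' then 1 else 0)
            = (if K ⊆ R then 1 else 0) * (if K ⊆ R' then 1 else 0) := by
          intro R R'
          by_cases h1 : K ⊆ R <;> by_cases h2 : K ⊆ R' <;>
            simp [h1, h2, Finset.subset_inter_iff]
        simp only [hsplit]
        rw [← Finset.sum_mul_sum]
        rw [← Finset.card_filter, card_supersets K hK hk, sq]
    _ = N.choose k * ((N - k).choose (n - k)) ^ 2 := by
        rw [Finset.sum_const, card_powersetCard, card_univ, Fintype.card_fin, smul_eq_mul]

lemma choose_mul_pow_le {n N : ℕ} (h : n ≤ N) : ∀ k, n.choose k * N ^ k ≤ N.choose k * n ^ k := by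
  intro k
  induction k with
  | zero => simp
  | succ k ih =>
    rcases Nat.lt_or_ge n (k+1) with hk | hk
    · rw [Nat.choose_eq_zero_of_lt hk]; simp
    have step : (n - k) * N ≤ (N - k) * n := by
      rw [Nat.sub_mul, Nat.sub_mul, mul_comm N n]
      exact Nat.sub_le_sub_left (Nat.mul_le_mul_left k h) _
    apply Nat.le_of_mul_le_mul_right (c := k + 1) _ (Nat.succ_pos k)
    calc n.choose (k+1) * N ^ (k+1) * (k+1) = (n.choose (k+1) * (k+1)) * (N ^ k * N) := by ring
      _ = (n.choose k * (n - k)) * (N ^ k * N) := by rw [Nat.choose_succ_right_eq]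
      _ = (n.choose k * N ^ k) * ((n - k) * N) := by ring
      _ ≤ (N.choose k * n ^ k) * ((N - k) * n) := Nat.mul_le_mul ih step
      _ = (N.choose k * (N - k)) * (n ^ k * n) := by ring
      _ = (N.choose (k+1) * (k+1)) * (n ^ k * n) := by rw [Nat.choose_succ_right_eq]
      _ = N.choose (k+1) * n ^ (k+1) * (k+1) := by ring

lemma key_nat_ineq {k n N : ℕ} (hk : k ≤ n) (hn : n ≤ N) :
    N.choose k * ((N - k).choose (n - k)) ^ 2 * N ^ k ≤ (N.choose n) ^ 2 * n.choose k * n ^ k := by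
  have hid : N.choose n * n.choose k = N.choose k * (N - k).choose (n - k) :=
    Nat.choose_mul hk
  have hb : (N - k).choose (n - k) * N ^ k ≤ N.choose n * n ^ k := by
    have hmul := calc n.choose k * ((N - k).choose (n - k) * N ^ k)
        = (n.choose k * N ^ k) * (N - k).choose (n - k) := by ring
      _ ≤ (N.choose k * n ^ k) * (N - k).choose (n - k) :=
          Nat.mul_le_mul_right _ (choose_mul_pow_le hn k)
      _ = (N.choose k * (N - k).choose (n - k)) * n ^ k := by ring
      _ = (N.choose n * n.choose k) * n ^ k := by rw [hid]
      _ = n.choose k * (N.choose n * n ^ k) := by ring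
    exact Nat.le_of_mul_le_mul_left hmul (Nat.choose_pos hk)
  calc N.choose k * ((N - k).choose (n - k)) ^ 2 * N ^ k
      = (N.choose k * (N - k).choose (n - k)) * ((N - k).choose (n - k) * N ^ k) := by ring
    _ = (N.choose n * n.choose k) * ((N - k).choose (n - k) * N ^ k) := by rw [hid]
    _ ≤ (N.choose n * n.choose k) * (N.choose n * n ^ k) := Nat.mul_le_mul_left _ hb
    _ = (N.choose n) ^ 2 * n.choose k * n ^ k := by ring

lemma pairs_mgf_bound {N n : ℕ} (hn : n ≤ N) (hN : 0 < N) {t : ℝ} (ht : 0 ≤ t) :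
    ∑ R ∈ Finset.powersetCard n (Finset.univ : Finset (Fin N)),
      ∑ R' ∈ Finset.powersetCard n (Finset.univ : Finset (Fin N)),
        Real.exp (t * ((R ∩ R').card : ℝ))
    ≤ (N.choose n : ℝ) ^ 2 * Real.exp ((n : ℝ) ^ 2 / N * (Real.exp t - 1)) := by
  set u : ℝ := Real.exp t - 1 with hu
  have hu0 : 0 ≤ u := by simp only [hu, sub_nonneg]; exact Real.one_le_exp ht
  have expand : ∀ m : ℕ, m ≤ n → Real.exp (t * m)
      = ∑ k ∈ Finset.range (n + 1), (m.choose k : ℝ) * u ^ k := by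
    intro m hm
    have h1 : Real.exp (t * m) = (1 + u) ^ m := by
      rw [mul_comm, Real.exp_nat_mul, hu]
      ring_nf
    rw [h1, add_comm, add_pow]
    simp only [one_pow, mul_one]
    rw [Finset.sum_subset (Finset.range_subset_range.2 (Nat.succ_le_succ hm))]
    · exact Finset.sum_congr rfl fun k _ => by ring
    · intro k _ hk
      rw [Finset.mem_range, Nat.lt_succ_iff, not_le] at hk
      rw [Nat.choose_eq_zero_of_lt hk]
      simp
  have card_inter_le : ∀ R ∈ Finset.powersetCard n (Finset.univ : Finset (Fin N)),
      ∀ R' ∈ Finset.powersetCard n (Finset.univ : Finset (Fin N)), (R ∩ R').card ≤ n := by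
    intro R hR R' _
    rw [mem_powersetCard_univ] at hR
    exact hR ▸ Finset.card_le_card inter_subset_left
  calc ∑ R ∈ powersetCard n (univ : Finset (Fin N)), ∑ R' ∈ powersetCard n (univ : Finset (Fin N)),
        Real.exp (t * ((R ∩ R').card : ℝ))
      = ∑ R ∈ powersetCard n (univ : Finset (Fin N)), ∑ R' ∈ powersetCard n (univ : Finset (Fin N)),
          ∑ k ∈ Finset.range (n + 1), ((R ∩ R').card.choose k : ℝ) * u ^ k := by
        refine Finset.sum_congr rfl fun R hR => Finset.sum_congr rfl fun R' hR' => ?_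
        exact expand _ (card_inter_le R hR R' hR')
    _ = ∑ k ∈ Finset.range (n + 1),
          (((N.choose k * ((N - k).choose (n - k)) ^ 2 : ℕ) : ℝ)) * u ^ k := by
        rw [Finset.sum_congr rfl fun R _ => Finset.sum_comm, Finset.sum_comm]
        refine Finset.sum_congr rfl fun k hk => ?_
        rw [Finset.mem_range, Nat.lt_succ_iff] at hk
        simp only [← Finset.sum_mul]
        congr 1
        exact_mod_cast count_pairs hk
    _ ≤ ∑ k ∈ Finset.range (n + 1),
          ((N.choose n : ℝ) ^ 2 * (n.choose k : ℝ)) * (u * n / N) ^ k := by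
        refine Finset.sum_le_sum fun k hk => ?_
        rw [Finset.mem_range, Nat.lt_succ_iff] at hk
        have hNk : (0:ℝ) < (N:ℝ) ^ k := by positivity
        have hcast : ((N.choose k * ((N - k).choose (n - k)) ^ 2 : ℕ) : ℝ) * (N:ℝ) ^ k
            ≤ (N.choose n : ℝ) ^ 2 * (n.choose k : ℝ) * (n:ℝ) ^ k := by
          have := key_nat_ineq hk hn
          exact_mod_cast Nat.cast_le.mpr this
        have h2 : ((N.choose k * ((N - k).choose (n - k)) ^ 2 : ℕ) : ℝ)
            ≤ (N.choose n : ℝ) ^ 2 * (n.choose k : ℝ) * ((n:ℝ) / N) ^ k := by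
          rw [div_pow, ← mul_div_assoc, le_div_iff₀ hNk]
          exact hcast
        calc ((N.choose k * ((N - k).choose (n - k)) ^ 2 : ℕ) : ℝ) * u ^ k
            ≤ ((N.choose n : ℝ) ^ 2 * (n.choose k : ℝ) * ((n:ℝ) / N) ^ k) * u ^ k :=
              mul_le_mul_of_nonneg_right h2 (by positivity)
          _ = ((N.choose n : ℝ) ^ 2 * (n.choose k : ℝ)) * (u * n / N) ^ k := by
              rw [mul_assoc, ← mul_pow]
              congr 2
              ring
    _ = (N.choose n : ℝ) ^ 2 * (1 + u * n / N) ^ n := by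
        have hbin : (1 + u * (n:ℝ) / N) ^ n
            = ∑ k ∈ Finset.range (n + 1), (n.choose k : ℝ) * (u * n / N) ^ k := by
          rw [add_comm, add_pow]
          exact Finset.sum_congr rfl fun k _ => by rw [one_pow]; ring
        rw [hbin, Finset.mul_sum]
        exact Finset.sum_congr rfl fun k _ => by ring
    _ ≤ (N.choose n : ℝ) ^ 2 * Real.exp ((n : ℝ) ^ 2 / N * u) := by
        have h1 : (1 + u * n / N) ^ n ≤ Real.exp (u * n / N) ^ n := by
          apply pow_le_pow_left₀ (by positivity)
          linarith [Real.add_one_le_exp (u * n / N)]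
        have h2 : Real.exp (u * n / N) ^ n = Real.exp ((n:ℝ) ^ 2 / N * u) := by
          rw [← Real.exp_nat_mul]
          congr 1
          ring
        calc (N.choose n : ℝ) ^ 2 * (1 + u * n / N) ^ n
            ≤ (N.choose n : ℝ) ^ 2 * Real.exp (u * n / N) ^ n :=
              mul_le_mul_of_nonneg_left h1 (by positivity)
          _ = _ := by rw [h2]

end CombAux

section MTAux

lemma sum_SIdx_eq {n N : ℕ} {M : Type*} [AddCommMonoid M] (f : Finset (Fin N) → Finset (Fin N) → M) :
    ∑ S : SIdx n N, f S.1.1 S.1.2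
      = ∑ R ∈ Finset.powersetCard n (Finset.univ : Finset (Fin N)),
          ∑ C ∈ Finset.powersetCard n (Finset.univ : Finset (Fin N)), f R C := by
  have h : ∀ p : Finset (Fin N) × Finset (Fin N),
      p ∈ (Finset.powersetCard n (Finset.univ : Finset (Fin N)))
        ×ˢ (Finset.powersetCard n (Finset.univ : Finset (Fin N)))
      ↔ (p.1.card = n ∧ p.2.card = n) := by
    intro p
    simp [Finset.mem_product, Finset.mem_powersetCard_univ]
  have step1 : ∑ p ∈ (Finset.powersetCard n (Finset.univ : Finset (Fin N)))
      ×ˢ (Finset.powersetCard n (Finset.univ : Finset (Fin N))), f p.1 p.2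
      = ∑ S : SIdx n N, f S.1.1 S.1.2 := by
    refine Finset.sum_bij (fun p hp => (⟨p, (h p).1 hp⟩ : SIdx n N)) ?_ ?_ ?_ ?_
    · intro a ha; exact Finset.mem_univ _
    · intro a ha b hb hab
      exact congrArg Subtype.val hab
    · intro S _
      exact ⟨S.1, (h S.1).2 S.2, Subtype.ext rfl⟩
    · intro a ha; rfl
  rw [← step1, Finset.sum_product]

lemma card_SIdx (n N : ℕ) : (Fintype.card (SIdx n N) : ℝ) = (N.choose n : ℝ) ^ 2 := by
  have h : Fintype.card (SIdx n N) = ∑ S : SIdx n N, 1 := (Finset.card_eq_sum_ones _)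
  rw [h, sum_SIdx_eq (fun _ _ => 1)]
  simp [Finset.sum_const, Finset.card_powersetCard, sq]

lemma xs_linear {n N : ℕ} (A : ℝ) (S T : SIdx n N) (x : Fin N → Fin N → ℝ) :
    A * XS S x + A * XS T x
      = ∑ i, ∑ j, (A * ((if i ∈ S.1.1 ∧ j ∈ S.1.2 then (1:ℝ) else 0)
          + (if i ∈ T.1.1 ∧ j ∈ T.1.2 then (1:ℝ) else 0))) * x i j := by
  have : ∀ i j, (A * ((if i ∈ S.1.1 ∧ j ∈ S.1.2 then (1:ℝ) else 0)
          + (if i ∈ T.1.1 ∧ j ∈ T.1.2 then (1:ℝ) else 0))) * x i j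
      = A * ((if i ∈ S.1.1 ∧ j ∈ S.1.2 then (1:ℝ) else 0) * x i j)
        + A * ((if i ∈ T.1.1 ∧ j ∈ T.1.2 then (1:ℝ) else 0) * x i j) := fun i j => by ring
  simp only [this, Finset.sum_add_distrib, ← Finset.mul_sum]
  rw [sum_ind_mul, sum_ind_mul]
  rfl

lemma integrable_pair {n N : ℕ} (A D : ℝ) (S T : SIdx n N) :
    Integrable (fun x => Real.exp (A * XS S x + A * XS T x - D)) (PTheta N 0) := by
  have hfun : (fun x : Fin N → Fin N → ℝ => Real.exp (A * XS S x + A * XS T x - D))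
      = fun x => Real.exp (∑ i, ∑ j, (A * ((if i ∈ S.1.1 ∧ j ∈ S.1.2 then (1:ℝ) else 0)
          + (if i ∈ T.1.1 ∧ j ∈ T.1.2 then (1:ℝ) else 0))) * x i j) * Real.exp (-D) := by
    ext x
    rw [← Real.exp_add, ← xs_linear]
    ring_nf
  rw [hfun]
  exact (integrable_exp_sum N _).mul_const _

lemma integral_pair_eq {n N : ℕ} (A D : ℝ) (S T : SIdx n N) :
    ∫ x, Real.exp (A * XS S x + A * XS T x - D) ∂(PTheta N 0)
      = Real.exp (A ^ 2 * ((n:ℝ)^2 + (n:ℝ)^2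
          + 2 * (((S.1.1 ∩ T.1.1).card : ℝ) * ((S.1.2 ∩ T.1.2).card : ℝ))) / 2 - D) := by
  have hfun : (fun x : Fin N → Fin N → ℝ => Real.exp (A * XS S x + A * XS T x - D))
      = fun x => Real.exp (∑ i, ∑ j, (A * ((if i ∈ S.1.1 ∧ j ∈ S.1.2 then (1:ℝ) else 0)
          + (if i ∈ T.1.1 ∧ j ∈ T.1.2 then (1:ℝ) else 0))) * x i j) * Real.exp (-D) := by
    ext x
    rw [← Real.exp_add, ← xs_linear]
    ring_nf
  rw [hfun, integral_mul_const, integral_exp_sum]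
  rw [← Real.exp_add]
  congr 1
  have hs := sum_sq_coeff A S.1.1 S.1.2 T.1.1 T.1.2
  rw [S.2.1, S.2.2, T.2.1, T.2.2] at hs
  rw [hs]
  ring

lemma Lpi_sq_eq {n N : ℕ} (A : ℝ) (x : Fin N → Fin N → ℝ) :
    (Lpi n N A x) ^ 2 = (((N.choose n : ℝ)) ^ 2)⁻¹ ^ 2 * ∑ S : SIdx n N, ∑ T : SIdx n N,
        Real.exp (A * XS S x + A * XS T x - A ^ 2 * (n : ℝ) ^ 2) := by
  rw [Lpi, mul_pow, sq (∑ S : SIdx n N, Real.exp (A * XS S x - A ^ 2 * (n : ℝ) ^ 2 / 2)),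
    Finset.sum_mul_sum]
  congr 1
  refine Finset.sum_congr rfl fun S _ => Finset.sum_congr rfl fun T _ => ?_
  rw [← Real.exp_add]
  congr 1
  ring

lemma integral_Lpi_sq {n N : ℕ} (A : ℝ) :
    ∫ x, (Lpi n N A x) ^ 2 ∂(PTheta N 0)
      = (((N.choose n : ℝ)) ^ 2)⁻¹ ^ 2 * ∑ S : SIdx n N, ∑ T : SIdx n N,
          Real.exp (A ^ 2 * (((S.1.1 ∩ T.1.1).card : ℝ) * ((S.1.2 ∩ T.1.2).card : ℝ))) := by
  simp only [Lpi_sq_eq A]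
  rw [integral_const_mul, integral_finset_sum _ fun S _ =>
    integrable_finset_sum _ fun T _ => integrable_pair A (A ^ 2 * (n : ℝ) ^ 2) S T]
  congr 1
  refine Finset.sum_congr rfl fun S _ => ?_
  rw [integral_finset_sum _ fun T _ => integrable_pair A (A ^ 2 * (n : ℝ) ^ 2) S T]
  refine Finset.sum_congr rfl fun T _ => ?_
  rw [integral_pair_eq]
  congr 1
  ring

lemma integrable_Lpi_sq {n N : ℕ} (A : ℝ) :
    Integrable (fun x => (Lpi n N A x) ^ 2) (PTheta N 0) := by
  simp only [Lpi_sq_eq A]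
  exact (integrable_finset_sum _ fun S _ => integrable_finset_sum _ fun T _ =>
    integrable_pair A (A ^ 2 * (n : ℝ) ^ 2) S T).const_mul _

lemma xs_linear1 {n N : ℕ} (A : ℝ) (S : SIdx n N) (x : Fin N → Fin N → ℝ) :
    A * XS S x = ∑ i, ∑ j, (A * (if i ∈ S.1.1 ∧ j ∈ S.1.2 then (1:ℝ) else 0)) * x i j := by
  simp only [mul_assoc, ← Finset.mul_sum]
  rw [sum_ind_mul]
  rfl

lemma sum_sq_coeff1 {N : ℕ} (A : ℝ) (R C : Finset (Fin N)) :
    ∑ i, ∑ j, (A * (if i ∈ R ∧ j ∈ C then (1:ℝ) else 0)) ^ 2 / 2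
      = A ^ 2 * ((R.card : ℝ) * C.card) / 2 := by
  have key : ∀ i j : Fin N, (A * (if i ∈ R ∧ j ∈ C then (1:ℝ) else 0)) ^ 2 / 2
      = (A ^ 2 / 2) * (if i ∈ R ∧ j ∈ C then (1:ℝ) else 0) := by
    intro i j
    by_cases h : i ∈ R ∧ j ∈ C <;> simp [h] <;> ring
  simp only [key, ← Finset.mul_sum]
  rw [sum_ind_one]
  ring

lemma integrable_single {n N : ℕ} (A D : ℝ) (S : SIdx n N) :
    Integrable (fun x => Real.exp (A * XS S x - D)) (PTheta N 0) := by
  have hfun : (fun x : Fin N → Fin N → ℝ => Real.exp (A * XS S x - D))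
      = fun x => Real.exp (∑ i, ∑ j, (A * (if i ∈ S.1.1 ∧ j ∈ S.1.2 then (1:ℝ) else 0)) * x i j)
          * Real.exp (-D) := by
    ext x
    rw [← Real.exp_add, ← xs_linear1]
    ring_nf
  rw [hfun]
  exact (integrable_exp_sum N _).mul_const _

lemma integral_Lpi {n N : ℕ} (A : ℝ) (hn : n ≤ N) :
    ∫ x, Lpi n N A x ∂(PTheta N 0) = 1 := by
  have hsingle : ∀ S : SIdx n N,
      ∫ x, Real.exp (A * XS S x - A ^ 2 * (n : ℝ) ^ 2 / 2) ∂(PTheta N 0) = 1 := by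
    intro S
    have hfun : (fun x : Fin N → Fin N → ℝ =>
        Real.exp (A * XS S x - A ^ 2 * (n : ℝ) ^ 2 / 2))
        = fun x => Real.exp (∑ i, ∑ j,
            (A * (if i ∈ S.1.1 ∧ j ∈ S.1.2 then (1:ℝ) else 0)) * x i j)
            * Real.exp (-(A ^ 2 * (n : ℝ) ^ 2 / 2)) := by
      ext x
      rw [← Real.exp_add, ← xs_linear1]
      ring_nf
    rw [hfun, integral_mul_const, integral_exp_sum]
    rw [← Real.exp_add]
    have hs := sum_sq_coeff1 A S.1.1 S.1.2
    rw [S.2.1, S.2.2] at hs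
    rw [hs, ← Real.exp_zero]
    congr 1
    ring
  simp only [Lpi]
  rw [integral_const_mul,
    integral_finset_sum _ fun S _ => integrable_single A (A ^ 2 * (n : ℝ) ^ 2 / 2) S]
  simp only [hsingle]
  rw [Finset.sum_const, Finset.card_univ, nsmul_eq_mul, mul_one, ← card_SIdx n N]
  rw [card_SIdx]
  rw [inv_mul_cancel₀]
  have : 0 < N.choose n := Nat.choose_pos hn
  positivity

lemma measurable_Lpi {n N : ℕ} (A : ℝ) : Measurable (Lpi n N A) := by
  apply Measurable.const_mul
  apply Finset.measurable_sum
  intro S _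
  apply Measurable.exp
  apply Measurable.sub_const
  apply Measurable.const_mul
  apply Finset.measurable_sum
  intro i _
  apply Finset.measurable_sum
  intro j _
  exact (measurable_pi_apply j).comp (measurable_pi_apply i)

lemma memLp_Lpi {n N : ℕ} (A : ℝ) : MemLp (Lpi n N A) 2 (PTheta N 0) := by
  rw [memLp_two_iff_integrable_sq (measurable_Lpi A).aestronglyMeasurable]
  exact integrable_Lpi_sq A

end MTAux

lemma exp_sub_one_le {y : ℝ} (hy : 0 ≤ y) : Real.exp y - 1 ≤ y * Real.exp y := by
  have h1 : Real.exp y * Real.exp (-y) = 1 := by rw [← Real.exp_add]; simp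
  have h2 : 1 - y ≤ Real.exp (-y) := by linarith [Real.add_one_le_exp (-y)]
  nlinarith [Real.exp_pos y, mul_le_mul_of_nonneg_left h2 (Real.exp_pos y).le]

/-- **Second moment bound in the dense below-boundary regime.**  There is an absolute
constant C < ∞ such that for all α > 0 and δ ∈ (−1, ∞) with α + δ ≤ 1/2, and every
integer n ≥ 2, with `N = ⌊n^{1+α}⌋` and `A = n^{−(1−α−δ)}`:
`E₀(L_π²) ≤ exp(C n^{2δ})`, hence `Var₀(L_π) ≤ exp(C n^{2δ}) − 1`. -/
theorem second_moment_dense_below :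
    ∃ C : ℝ, 0 < C ∧ ∀ α δ : ℝ, 0 < α → -1 < δ → α + δ ≤ 1 / 2 →
      ∀ n : ℕ, 2 ≤ n →
        (∫ x, (Lpi n ⌊(n : ℝ) ^ (1 + α)⌋₊ ((n : ℝ) ^ (-(1 - α - δ))) x) ^ 2
            ∂(PTheta ⌊(n : ℝ) ^ (1 + α)⌋₊ 0)) ≤ Real.exp (C * (n : ℝ) ^ (2 * δ)) ∧
        variance (Lpi n ⌊(n : ℝ) ^ (1 + α)⌋₊ ((n : ℝ) ^ (-(1 - α - δ))))
            (PTheta ⌊(n : ℝ) ^ (1 + α)⌋₊ 0) ≤ Real.exp (C * (n : ℝ) ^ (2 * δ)) - 1 := by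
  refine ⟨Real.exp 10, Real.exp_pos 10, fun α δ hα hδ hαδ n hn => ?_⟩
  set N : ℕ := ⌊(n : ℝ) ^ (1 + α)⌋₊ with hNdef
  set A : ℝ := (n : ℝ) ^ (-(1 - α - δ)) with hAdef
  have hn0 : (0:ℝ) < n := by positivity
  have hn1 : (1:ℝ) ≤ n := by exact_mod_cast Nat.one_le_of_lt hn
  have hn2 : (2:ℝ) ≤ n := by exact_mod_cast hn
  -- basic facts about N
  have hx2 : (2:ℝ) ≤ (n : ℝ) ^ (1 + α) := by
    calc (2:ℝ) ≤ (n:ℝ) := hn2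
      _ = (n:ℝ) ^ (1:ℝ) := (Real.rpow_one _).symm
      _ ≤ (n:ℝ) ^ (1 + α) := Real.rpow_le_rpow_of_exponent_le hn1 (by linarith)
  have hNlow : (n : ℝ) ^ (1 + α) / 2 ≤ (N : ℝ) := by
    have hfl : (n : ℝ) ^ (1 + α) < (N : ℝ) + 1 := Nat.lt_floor_add_one _
    linarith
  have hNup : (N : ℝ) ≤ (n : ℝ) ^ (1 + α) := Nat.floor_le (by positivity)
  have hNpos : 0 < N := by
    have : (0:ℝ) < (N:ℝ) := by linarith
    exact_mod_cast this
  have hnN : n ≤ N := by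
    apply Nat.le_floor
    calc ((n:ℕ):ℝ) = (n:ℝ) ^ (1:ℝ) := (Real.rpow_one _).symm
      _ ≤ (n:ℝ) ^ (1 + α) := Real.rpow_le_rpow_of_exponent_le hn1 (by linarith)
  have hNr : (0:ℝ) < (N:ℝ) := by exact_mod_cast hNpos
  have hA0 : 0 ≤ A := Real.rpow_nonneg hn0.le _
  have hA2 : A ^ 2 = (n : ℝ) ^ (-(1 - α - δ) + -(1 - α - δ)) := by
    rw [sq, ← Real.rpow_add hn0]
  -- q and s
  set q : ℝ := (n : ℝ) ^ 2 / N with hqdef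
  set s : ℝ := Real.exp 1 * A ^ 2 * q with hsdef
  have hq0 : 0 ≤ q := by positivity
  have hq_le : q ≤ 2 * (n : ℝ) ^ (1 - α) := by
    have h1 : q ≤ (n : ℝ) ^ 2 / ((n : ℝ) ^ (1 + α) / 2) := by
      apply div_le_div_of_nonneg_left (by positivity) (by linarith) hNlow
    have h2 : (n : ℝ) ^ 2 / ((n : ℝ) ^ (1 + α) / 2) = 2 * ((n:ℝ) ^ (2:ℝ) / (n:ℝ) ^ (1 + α)) := by
      rw [show ((n:ℝ) ^ (2:ℝ)) = (n:ℝ) ^ 2 by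
        rw [show (2:ℝ) = ((2:ℕ):ℝ) by norm_num, Real.rpow_natCast]]
      field_simp
    have h3 : (n:ℝ) ^ (2:ℝ) / (n:ℝ) ^ (1 + α) = (n:ℝ) ^ (1 - α) := by
      rw [← Real.rpow_sub hn0]
      congr 1
      ring
    calc q ≤ (n : ℝ) ^ 2 / ((n : ℝ) ^ (1 + α) / 2) := h1
      _ = 2 * ((n:ℝ) ^ (2:ℝ) / (n:ℝ) ^ (1 + α)) := h2
      _ = 2 * (n : ℝ) ^ (1 - α) := by rw [h3]
  have hB_le_one : A ^ 2 * (n : ℝ) ^ (1 - α) ≤ 1 := by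
    rw [hA2, ← Real.rpow_add hn0]
    apply Real.rpow_le_one_of_one_le_of_nonpos hn1
    linarith
  have hB0 : 0 ≤ A ^ 2 * (n : ℝ) ^ (1 - α) := by positivity
  have hs0 : 0 ≤ s := by positivity
  have hs_le' : s ≤ 2 * Real.exp 1 * (A ^ 2 * (n : ℝ) ^ (1 - α)) := by
    rw [hsdef]
    calc Real.exp 1 * A ^ 2 * q ≤ Real.exp 1 * A ^ 2 * (2 * (n : ℝ) ^ (1 - α)) :=
          mul_le_mul_of_nonneg_left hq_le (by positivity)
      _ = 2 * Real.exp 1 * (A ^ 2 * (n : ℝ) ^ (1 - α)) := by ring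
  have hs_le : s ≤ 2 * Real.exp 1 := by
    calc s ≤ 2 * Real.exp 1 * (A ^ 2 * (n : ℝ) ^ (1 - α)) := hs_le'
      _ ≤ 2 * Real.exp 1 * 1 := mul_le_mul_of_nonneg_left hB_le_one (by positivity)
      _ = 2 * Real.exp 1 := by ring
  -- pointwise bound: q(e^(A² m) − 1) ≤ s m for m ≤ n
  have hpt : ∀ m : ℕ, m ≤ n → q * (Real.exp (A ^ 2 * m) - 1) ≤ s * m := by
    intro m hm
    have ht0 : 0 ≤ A ^ 2 * (m:ℝ) := by positivity
    have ht1 : A ^ 2 * (m:ℝ) ≤ 1 := by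
      have h1 : A ^ 2 * (m:ℝ) ≤ A ^ 2 * (n:ℝ) :=
        mul_le_mul_of_nonneg_left (by exact_mod_cast hm) (by positivity)
      have h2 : A ^ 2 * (n:ℝ) = (n:ℝ) ^ (-(1 - α - δ) + -(1 - α - δ) + 1) := by
        rw [hA2]
        exact (Real.rpow_add_one hn0.ne' _).symm
      have h3 : (n:ℝ) ^ (-(1 - α - δ) + -(1 - α - δ) + 1) ≤ 1 :=
        Real.rpow_le_one_of_one_le_of_nonpos hn1 (by linarith)
      linarith
    have h4 : Real.exp (A ^ 2 * m) - 1 ≤ (A ^ 2 * m) * Real.exp (A ^ 2 * m) :=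
      exp_sub_one_le ht0
    have h5 : Real.exp (A ^ 2 * m) ≤ Real.exp 1 := Real.exp_le_exp.2 ht1
    have h6 : Real.exp (A ^ 2 * m) - 1 ≤ (A ^ 2 * m) * Real.exp 1 := by
      calc Real.exp (A ^ 2 * m) - 1 ≤ (A ^ 2 * m) * Real.exp (A ^ 2 * m) := h4
        _ ≤ (A ^ 2 * m) * Real.exp 1 := mul_le_mul_of_nonneg_left h5 ht0
    calc q * (Real.exp (A ^ 2 * m) - 1) ≤ q * ((A ^ 2 * m) * Real.exp 1) :=
          mul_le_mul_of_nonneg_left h6 hq0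
      _ = s * m := by rw [hsdef]; ring
  -- the four-fold sum bound
  have hCn : (0:ℝ) < (N.choose n : ℝ) := by
    exact_mod_cast Nat.choose_pos hnN
  have hsum : ∑ S : SIdx n N, ∑ T : SIdx n N,
      Real.exp (A ^ 2 * (((S.1.1 ∩ T.1.1).card : ℝ) * ((S.1.2 ∩ T.1.2).card : ℝ)))
      ≤ (N.choose n : ℝ) ^ 2 * ((N.choose n : ℝ) ^ 2
          * Real.exp (q * (Real.exp s - 1))) := by
    have hexpand : ∑ S : SIdx n N, ∑ T : SIdx n N,
        Real.exp (A ^ 2 * (((S.1.1 ∩ T.1.1).card : ℝ) * ((S.1.2 ∩ T.1.2).card : ℝ)))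
        = ∑ C ∈ Finset.powersetCard n (Finset.univ : Finset (Fin N)),
            ∑ C' ∈ Finset.powersetCard n (Finset.univ : Finset (Fin N)),
            ∑ R ∈ Finset.powersetCard n (Finset.univ : Finset (Fin N)),
            ∑ R' ∈ Finset.powersetCard n (Finset.univ : Finset (Fin N)),
              Real.exp (A ^ 2 * (((R ∩ R').card : ℝ) * ((C ∩ C').card : ℝ))) := by
      rw [sum_SIdx_eq (f := fun R C => ∑ T : SIdx n N,
        Real.exp (A ^ 2 * (((R ∩ T.1.1).card : ℝ) * ((C ∩ T.1.2).card : ℝ))))]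
      rw [Finset.sum_congr rfl fun R _ => Finset.sum_congr rfl fun C _ =>
        sum_SIdx_eq (f := fun R' C' =>
          Real.exp (A ^ 2 * (((R ∩ R').card : ℝ) * ((C ∩ C').card : ℝ))))]
      -- now reorder the four sums
      rw [Finset.sum_congr rfl fun R _ => Finset.sum_congr rfl fun C _ => Finset.sum_comm]
      rw [Finset.sum_comm]
      exact Finset.sum_congr rfl fun C _ => Finset.sum_comm
    rw [hexpand]
    have hinner : ∀ C ∈ Finset.powersetCard n (Finset.univ : Finset (Fin N)),
        ∀ C' ∈ Finset.powersetCard n (Finset.univ : Finset (Fin N)),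
        ∑ R ∈ Finset.powersetCard n (Finset.univ : Finset (Fin N)),
          ∑ R' ∈ Finset.powersetCard n (Finset.univ : Finset (Fin N)),
            Real.exp (A ^ 2 * (((R ∩ R').card : ℝ) * ((C ∩ C').card : ℝ)))
        ≤ (N.choose n : ℝ) ^ 2 * Real.exp (s * ((C ∩ C').card : ℝ)) := by
      intro C hC C' _
      have hCm : (C ∩ C').card ≤ n := by
        rw [Finset.mem_powersetCard_univ] at hC
        exact hC ▸ Finset.card_le_card Finset.inter_subset_left
      have ht0 : 0 ≤ A ^ 2 * ((C ∩ C').card : ℝ) := by positivity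
      have hrw : ∑ R ∈ Finset.powersetCard n (Finset.univ : Finset (Fin N)),
          ∑ R' ∈ Finset.powersetCard n (Finset.univ : Finset (Fin N)),
            Real.exp (A ^ 2 * (((R ∩ R').card : ℝ) * ((C ∩ C').card : ℝ)))
          = ∑ R ∈ Finset.powersetCard n (Finset.univ : Finset (Fin N)),
          ∑ R' ∈ Finset.powersetCard n (Finset.univ : Finset (Fin N)),
            Real.exp ((A ^ 2 * ((C ∩ C').card : ℝ)) * ((R ∩ R').card : ℝ)) := by
        refine Finset.sum_congr rfl fun R _ => Finset.sum_congr rfl fun R' _ => ?_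
        congr 1
        ring
      rw [hrw]
      calc ∑ R ∈ Finset.powersetCard n (Finset.univ : Finset (Fin N)),
          ∑ R' ∈ Finset.powersetCard n (Finset.univ : Finset (Fin N)),
            Real.exp ((A ^ 2 * ((C ∩ C').card : ℝ)) * ((R ∩ R').card : ℝ))
          ≤ (N.choose n : ℝ) ^ 2
            * Real.exp ((n : ℝ) ^ 2 / N * (Real.exp (A ^ 2 * ((C ∩ C').card : ℝ)) - 1)) :=
            pairs_mgf_bound hnN hNpos ht0
        _ ≤ (N.choose n : ℝ) ^ 2 * Real.exp (s * ((C ∩ C').card : ℝ)) := by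
            apply mul_le_mul_of_nonneg_left _ (by positivity)
            apply Real.exp_le_exp.2
            exact hpt _ hCm
    calc ∑ C ∈ Finset.powersetCard n (Finset.univ : Finset (Fin N)),
            ∑ C' ∈ Finset.powersetCard n (Finset.univ : Finset (Fin N)),
            ∑ R ∈ Finset.powersetCard n (Finset.univ : Finset (Fin N)),
            ∑ R' ∈ Finset.powersetCard n (Finset.univ : Finset (Fin N)),
              Real.exp (A ^ 2 * (((R ∩ R').card : ℝ) * ((C ∩ C').card : ℝ)))
        ≤ ∑ C ∈ Finset.powersetCard n (Finset.univ : Finset (Fin N)),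
            ∑ C' ∈ Finset.powersetCard n (Finset.univ : Finset (Fin N)),
            (N.choose n : ℝ) ^ 2 * Real.exp (s * ((C ∩ C').card : ℝ)) :=
          Finset.sum_le_sum fun C hC => Finset.sum_le_sum fun C' hC' => hinner C hC C' hC'
      _ = (N.choose n : ℝ) ^ 2 * ∑ C ∈ Finset.powersetCard n (Finset.univ : Finset (Fin N)),
            ∑ C' ∈ Finset.powersetCard n (Finset.univ : Finset (Fin N)),
            Real.exp (s * ((C ∩ C').card : ℝ)) := by
          rw [Finset.mul_sum]
          exact Finset.sum_congr rfl fun C _ => (Finset.mul_sum _ _ _).symm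
      _ ≤ (N.choose n : ℝ) ^ 2 * ((N.choose n : ℝ) ^ 2
            * Real.exp ((n : ℝ) ^ 2 / N * (Real.exp s - 1))) :=
          mul_le_mul_of_nonneg_left (pairs_mgf_bound hnN hNpos hs0) (by positivity)
      _ = (N.choose n : ℝ) ^ 2 * ((N.choose n : ℝ) ^ 2 * Real.exp (q * (Real.exp s - 1))) := rfl
  -- final numeric bound on the exponent
  have hfinal : q * (Real.exp s - 1) ≤ Real.exp 10 * (n : ℝ) ^ (2 * δ) := by
    have h1 : Real.exp s - 1 ≤ s * Real.exp s := exp_sub_one_le hs0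
    have h3 : Real.exp s ≤ Real.exp (2 * Real.exp 1) := Real.exp_le_exp.2 hs_le
    have hkey : (n:ℝ) ^ (1 - α) * (A ^ 2 * (n : ℝ) ^ (1 - α)) = (n : ℝ) ^ (2 * δ) := by
      rw [hA2, ← Real.rpow_add hn0, ← Real.rpow_add hn0]
      congr 1
      ring
    have hchain : q * (Real.exp s - 1)
        ≤ (2 * (n:ℝ) ^ (1 - α)) * ((2 * Real.exp 1 * (A ^ 2 * (n : ℝ) ^ (1 - α)))
            * Real.exp (2 * Real.exp 1)) := by
      calc q * (Real.exp s - 1) ≤ q * (s * Real.exp s) :=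
            mul_le_mul_of_nonneg_left h1 hq0
        _ ≤ (2 * (n:ℝ) ^ (1 - α)) * (s * Real.exp s) := by
            apply mul_le_mul_of_nonneg_right hq_le
            positivity
        _ ≤ (2 * (n:ℝ) ^ (1 - α)) * ((2 * Real.exp 1 * (A ^ 2 * (n : ℝ) ^ (1 - α)))
              * Real.exp (2 * Real.exp 1)) := by
            apply mul_le_mul_of_nonneg_left _ (by positivity)
            exact mul_le_mul hs_le' h3 (Real.exp_pos _).le (by positivity)
    have hconst : 4 * Real.exp 1 * Real.exp (2 * Real.exp 1) ≤ Real.exp 10 := by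
      have he : Real.exp 1 < 2.7182818286 := Real.exp_one_lt_d9
      have h9 : (4:ℝ) ≤ Real.exp (9 - 2 * Real.exp 1) := by
        have h10 := Real.add_one_le_exp (9 - 2 * Real.exp 1)
        linarith
      have hrw : Real.exp 10
          = Real.exp (9 - 2 * Real.exp 1) * (Real.exp 1 * Real.exp (2 * Real.exp 1)) := by
        rw [← Real.exp_add, ← Real.exp_add]
        congr 1
        ring
      calc 4 * Real.exp 1 * Real.exp (2 * Real.exp 1)
          = 4 * (Real.exp 1 * Real.exp (2 * Real.exp 1)) := by ring
        _ ≤ Real.exp (9 - 2 * Real.exp 1) * (Real.exp 1 * Real.exp (2 * Real.exp 1)) :=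
            mul_le_mul_of_nonneg_right h9 (by positivity)
        _ = Real.exp 10 := hrw.symm
    calc q * (Real.exp s - 1)
        ≤ (2 * (n:ℝ) ^ (1 - α)) * ((2 * Real.exp 1 * (A ^ 2 * (n : ℝ) ^ (1 - α)))
            * Real.exp (2 * Real.exp 1)) := hchain
      _ = (4 * Real.exp 1 * Real.exp (2 * Real.exp 1))
            * ((n:ℝ) ^ (1 - α) * (A ^ 2 * (n : ℝ) ^ (1 - α))) := by ring
      _ = (4 * Real.exp 1 * Real.exp (2 * Real.exp 1)) * (n : ℝ) ^ (2 * δ) := by rw [hkey]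
      _ ≤ Real.exp 10 * (n : ℝ) ^ (2 * δ) :=
          mul_le_mul_of_nonneg_right hconst (Real.rpow_nonneg hn0.le _)
  -- conclude
  have hint : (∫ x, (Lpi n N A x) ^ 2 ∂(PTheta N 0))
      ≤ Real.exp (Real.exp 10 * (n : ℝ) ^ (2 * δ)) := by
    rw [integral_Lpi_sq]
    calc (((N.choose n : ℝ)) ^ 2)⁻¹ ^ 2 * ∑ S : SIdx n N, ∑ T : SIdx n N,
            Real.exp (A ^ 2 * (((S.1.1 ∩ T.1.1).card : ℝ) * ((S.1.2 ∩ T.1.2).card : ℝ)))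
        ≤ (((N.choose n : ℝ)) ^ 2)⁻¹ ^ 2 * ((N.choose n : ℝ) ^ 2 * ((N.choose n : ℝ) ^ 2
            * Real.exp (q * (Real.exp s - 1)))) :=
          mul_le_mul_of_nonneg_left hsum (by positivity)
      _ = Real.exp (q * (Real.exp s - 1)) := by
          field_simp
      _ ≤ Real.exp (Real.exp 10 * (n : ℝ) ^ (2 * δ)) := Real.exp_le_exp.2 hfinal
  refine ⟨hint, ?_⟩
  have hvar : variance (Lpi n N A) (PTheta N 0)
      = (∫ x, (Lpi n N A x) ^ 2 ∂(PTheta N 0)) - 1 := by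
    rw [variance_eq_sub (memLp_Lpi A)]
    rw [integral_Lpi A hnN]
    norm_num
  rw [hvar]
  linarith [hint]

end
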